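/- arXiv:2303.17165 — 2 statements merged into one kernel-verified Lean document; each statement's English description precedes it below -/
import Mathlib

section
/- (Lemma 1) Let W be symmetric, doubly stochastic and positive definite, with 1 a simple eigenvalue and second-largest eigenvalue λ₂ ∈ (0,1). Given α > 0, let x̂* = (x̂*₁,…,x̂*ₘ) be a local minimizer of Q_α (in particular ∇Q_α(x̂*) = 0). Then for each i = 1,…,m, ‖x̂*_i − x̄*‖ ≤ α ‖∇F(x̂*)‖ / (1 − λ₂), where x̄* = (1/m) Σ_{j=1}^m x̂*_j. -/
open scoped BigOperators RealInnerProductSpace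
open Matrix MeasureTheory

noncomputable section

/-- The stacked space `(ℝⁿ)ᵐ ≅ ℝ^{mn}`. -/
abbrev BigSpace (m n : ℕ) := EuclideanSpace ℝ (Fin m × Fin n)

/-- The `i`-th block component `x̂ᵢ ∈ ℝⁿ` of `x̂ ∈ ℝ^{mn}`. -/
def comp {m n : ℕ} (x : BigSpace m n) (i : Fin m) : EuclideanSpace ℝ (Fin n) :=
  WithLp.toLp 2 (fun j => x (i, j))

/-- `F(x̂) = Σᵢ fᵢ(x̂ᵢ)`. -/
def stackF {m n : ℕ} (f : Fin m → EuclideanSpace ℝ (Fin n) → ℝ) (x : BigSpace m n) : ℝ :=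
  ∑ i, f i (comp x i)

/-- The action of `Ŵ = W ⊗ Iₙ` on `ℝ^{mn}`. -/
def Wact {m n : ℕ} (W : Matrix (Fin m) (Fin m) ℝ) (x : BigSpace m n) : BigSpace m n :=
  WithLp.toLp 2 (fun p : Fin m × Fin n => ∑ k, W p.1 k * x (k, p.2))

/-- `W` is doubly stochastic: nonnegative entries, all row and column sums equal `1`. -/
def IsDoublyStochastic {m : ℕ} (W : Matrix (Fin m) (Fin m) ℝ) : Prop :=
  (∀ i j, 0 ≤ W i j) ∧ (∀ i, ∑ j, W i j = 1) ∧ (∀ j, ∑ i, W i j = 1)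

/-- The auxiliary function `Q_α(x̂) = F(x̂) + (1/(2α)) x̂ᵀ(I_{mn} − Ŵ)x̂`. -/
def Qaux {m n : ℕ} (f : Fin m → EuclideanSpace ℝ (Fin n) → ℝ)
    (W : Matrix (Fin m) (Fin m) ℝ) (α : ℝ) (x : BigSpace m n) : ℝ :=
  stackF f x + (1 / (2 * α)) * ⟪x, x - Wact W x⟫

/-- The Hessian quadratic form `vᵀ (∇²g(x)) v`, via the second iterated Fréchet derivative. -/
def hessQF {E : Type*} [NormedAddCommGroup E] [NormedSpace ℝ E]
    (g : E → ℝ) (x v : E) : ℝ :=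
  iteratedFDeriv ℝ 2 g x ![v, v]

/-! ### Auxiliary material -/

/-- `comp` as a continuous linear map. -/
def compCLM (m n : ℕ) (i : Fin m) : BigSpace m n →L[ℝ] EuclideanSpace ℝ (Fin n) :=
  LinearMap.toContinuousLinearMap
  { toFun := fun x => comp x i
    map_add' := fun _ _ => rfl
    map_smul' := fun _ _ => rfl }

/-- `Wact` as a continuous linear map. -/
def WactCLM {m n : ℕ} (W : Matrix (Fin m) (Fin m) ℝ) : BigSpace m n →L[ℝ] BigSpace m n :=
  LinearMap.toContinuousLinearMap
  { toFun := Wact W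
    map_add' := by
      intro x y; ext p
      simp [Wact, PiLp.add_apply, mul_add, Finset.sum_add_distrib]
    map_smul' := by
      intro c x; ext p
      simp only [Wact, PiLp.smul_apply, smul_eq_mul, RingHom.id_apply, Finset.mul_sum]
      exact Finset.sum_congr rfl fun k _ => by ring }

lemma inner_eq_sum {m n : ℕ} (x y : BigSpace m n) :
    ⟪x, y⟫ = ∑ p, x p * y p := by
  simp [PiLp.inner_apply, RCLike.inner_apply, conj_trivial]
  exact Finset.sum_congr rfl fun _ _ => mul_comm _ _

lemma Wact_inner {m n : ℕ} {W : Matrix (Fin m) (Fin m) ℝ} (hW : W.IsHermitian)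
    (x y : BigSpace m n) : ⟪Wact W x, y⟫ = ⟪x, Wact W y⟫ := by
  have hsym : ∀ i k, W k i = W i k := by
    intro i k; conv_lhs => rw [← hW]
    simp [Matrix.conjTranspose_apply]
  rw [inner_eq_sum, inner_eq_sum]
  rw [Fintype.sum_prod_type, Fintype.sum_prod_type]
  simp only [Wact, Finset.sum_mul, Finset.mul_sum]
  calc ∑ i, ∑ j, ∑ k, W i k * x (k, j) * y (i, j)
      = ∑ j, ∑ i, ∑ k, W i k * x (k, j) * y (i, j) := Finset.sum_comm
    _ = ∑ j, ∑ k, ∑ i, W i k * x (k, j) * y (i, j) :=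
        Finset.sum_congr rfl fun j _ => Finset.sum_comm
    _ = ∑ k, ∑ j, ∑ i, W i k * x (k, j) * y (i, j) := Finset.sum_comm
    _ = ∑ i, ∑ j, ∑ k, x (i, j) * (W i k * y (k, j)) := by
        refine Finset.sum_congr rfl fun k _ => Finset.sum_congr rfl fun j _ =>
          Finset.sum_congr rfl fun i _ => ?_
        rw [hsym i k]; ring

lemma stackF_diff {m n : ℕ} (f : Fin m → EuclideanSpace ℝ (Fin n) → ℝ)
    (hf : ∀ i, ContDiff ℝ 1 (f i)) (x : BigSpace m n) :
    DifferentiableAt ℝ (stackF f) x := by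
  have h : stackF f = fun x => ∑ i, f i (compCLM m n i x) := rfl
  rw [h]
  exact DifferentiableAt.fun_sum fun i _ =>
    ((hf i).differentiable one_ne_zero).differentiableAt.comp x (compCLM m n i).differentiableAt

/-- Gradient identity coming from the first-order condition at the local minimizer. -/
lemma grad_eq {m n : ℕ} (f : Fin m → EuclideanSpace ℝ (Fin n) → ℝ)
    (hf : ∀ i, ContDiff ℝ 1 (f i)) (W : Matrix (Fin m) (Fin m) ℝ) (hW : W.IsHermitian)
    (α : ℝ) (hα : 0 < α) (xstar : BigSpace m n)
    (hmin : IsLocalMin (Qaux f W α) xstar) :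
    gradient (stackF f) xstar = (-α⁻¹) • (xstar - Wact W xstar) := by
  set w : BigSpace m n := xstar - Wact W xstar with hw
  set c : ℝ := 1 / (2 * α) with hc
  have hWd : HasFDerivAt (fun x : BigSpace m n => x - WactCLM W x)
      (ContinuousLinearMap.id ℝ (BigSpace m n) - WactCLM W) xstar :=
    (hasFDerivAt_id xstar).sub (WactCLM W).hasFDerivAt
  set DB : BigSpace m n →L[ℝ] ℝ :=
    (fderivInnerCLM ℝ (xstar, xstar - WactCLM W xstar)).comp
      ((ContinuousLinearMap.id ℝ (BigSpace m n)).prod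
        (ContinuousLinearMap.id ℝ (BigSpace m n) - WactCLM W)) with hDBdef
  have hB : HasFDerivAt (fun x : BigSpace m n => ⟪x, x - WactCLM W x⟫) DB xstar :=
    (hasFDerivAt_id xstar).inner ℝ hWd
  have hDB : ∀ v, DB v = 2 * ⟪w, v⟫ := by
    intro v
    have h1 : DB v = ⟪xstar, v - WactCLM W v⟫ + ⟪v, xstar - WactCLM W xstar⟫ := by
      simp [hDBdef, fderivInnerCLM_apply]
    rw [h1]
    have h2 : (⟪xstar, v - WactCLM W v⟫ : ℝ) = ⟪w, v⟫ := by
      rw [inner_sub_right, hw, inner_sub_left]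
      have : WactCLM W v = Wact W v := rfl
      rw [this, ← Wact_inner hW xstar v]
    have h3 : (⟪v, xstar - WactCLM W xstar⟫ : ℝ) = ⟪w, v⟫ := by
      rw [real_inner_comm]
      congr 1
    rw [h2, h3]; ring
  have hsd := stackF_diff f hf xstar
  have hQ : HasFDerivAt (Qaux f W α) (fderiv ℝ (stackF f) xstar + c • DB) xstar := by
    have hq : Qaux f W α = fun x => stackF f x + c * ⟪x, x - WactCLM W x⟫ := rfl
    rw [hq]
    exact hsd.hasFDerivAt.add (hB.const_mul c)
  have hzero : fderiv ℝ (stackF f) xstar + c • DB = 0 := hmin.hasFDerivAt_eq_zero hQ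
  have hg : HasGradientAt (stackF f) ((-α⁻¹) • w) xstar := by
    rw [hasGradientAt_iff_hasFDerivAt]
    have heq : (InnerProductSpace.toDual ℝ (BigSpace m n)) ((-α⁻¹) • w) =
        fderiv ℝ (stackF f) xstar := by
      ext v
      have h0 : fderiv ℝ (stackF f) xstar v + c • DB v = 0 := by
        have := congrArg (fun (L : BigSpace m n →L[ℝ] ℝ) => L v) hzero
        simpa using this
      have h1 : (InnerProductSpace.toDual ℝ (BigSpace m n)) ((-α⁻¹) • w) v
          = (-α⁻¹) * ⟪w, v⟫ := by
        simp [InnerProductSpace.toDual_apply_apply, real_inner_smul_left]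
      rw [h1]
      have h2 : c * (2 * ⟪w, v⟫) = α⁻¹ * ⟪w, v⟫ := by
        rw [hc]; field_simp
      have := hDB v
      simp only [smul_eq_mul] at h0
      rw [this] at h0
      linarith [h0, h2]
    rw [heq]
    exact hsd.hasFDerivAt
  exact hg.gradient

/-- `mulVec` landing in `EuclideanSpace`. -/
def mv {m : ℕ} (W : Matrix (Fin m) (Fin m) ℝ) (a : EuclideanSpace ℝ (Fin m)) :
    EuclideanSpace ℝ (Fin m) := WithLp.toLp 2 (W.mulVec a)

lemma mv_inner {m : ℕ} {W : Matrix (Fin m) (Fin m) ℝ} (hW : W.IsHermitian)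
    (a b : EuclideanSpace ℝ (Fin m)) :
    ⟪mv W a, b⟫ = ⟪a, mv W b⟫ := by
  have hsym : ∀ i k, W k i = W i k := by
    intro i k; conv_lhs => rw [← hW]
    simp [Matrix.conjTranspose_apply]
  simp only [PiLp.inner_apply, RCLike.inner_apply, conj_trivial, mv, Matrix.mulVec,
    dotProduct, Finset.sum_mul, Finset.mul_sum]
  rw [Finset.sum_comm]
  refine Finset.sum_congr rfl fun k _ => Finset.sum_congr rfl fun i _ => ?_
  rw [hsym i k]; ring

/-- Key spectral inequality on `ℝ^m`: on the orthogonal complement of the consensus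
direction, `I - W` is bounded below by `1 - λ₂`. -/
lemma spectral_key {m : ℕ} (hm : 0 < m) (W : Matrix (Fin m) (Fin m) ℝ)
    (hW : W.IsHermitian) (hrow : ∀ i, ∑ j, W i j = 1)
    (hsimple : ∃! i, hW.eigenvalues i = 1)
    (lam2 : ℝ) (hlam2_lt : lam2 < 1)
    (hub : ∀ i, hW.eigenvalues i = 1 ∨ hW.eigenvalues i ≤ lam2)
    (u : EuclideanSpace ℝ (Fin m)) (hu : ∑ i, u i = 0) :
    (1 - lam2) ^ 2 * ∑ i, u i ^ 2 ≤ ∑ i, (u i - mv W u i) ^ 2 := by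
  obtain ⟨i0, hi0, huniq⟩ := hsimple
  set B := hW.eigenvectorBasis with hB
  set lam := hW.eigenvalues with hlam
  have hBk : ∀ k, mv W (B k) = lam k • B k := fun k => by
    ext i; simpa [mv] using congrFun (hW.mulVec_eigenvectorBasis k) i
  have hWv : ∀ (k : Fin m) (a : EuclideanSpace ℝ (Fin m)),
      ⟪B k, mv W a⟫ = lam k * ⟪B k, a⟫ := by
    intro k a
    rw [← mv_inner hW, hBk k, real_inner_smul_left]
  set ones : EuclideanSpace ℝ (Fin m) := WithLp.toLp 2 (fun _ => 1) with hones
  have hWones : mv W ones = ones := by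
    ext i
    simpa [mv, Matrix.mulVec, dotProduct, ones] using hrow i
  have hd : ∀ k, k ≠ i0 → ⟪B k, ones⟫ = 0 := by
    intro k hk
    have h1 : lam k * ⟪B k, ones⟫ = ⟪B k, ones⟫ := by
      rw [← hWv k ones, hWones]
    have h2 : lam k ≠ 1 := fun h => hk (huniq k h)
    have h3 : (lam k - 1) * ⟪B k, ones⟫ = 0 := by
      have : lam k * ⟪B k, ones⟫ - ⟪B k, ones⟫ = 0 := sub_eq_zero.mpr h1
      linarith [this]
    rcases mul_eq_zero.mp h3 with h | h
    · exact absurd (by linarith [sub_eq_zero.mp (by linarith : lam k - 1 = 0)] : lam k = 1) h2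
    · exact h
  have hsum : ∑ k, ⟪B k, ones⟫ • B k = ⟪B i0, ones⟫ • B i0 :=
    Finset.sum_eq_single_of_mem i0 (Finset.mem_univ i0)
      (fun k _ hk => by rw [hd k hk, zero_smul])
  have hones_eq : ones = ⟪B i0, ones⟫ • B i0 := by rw [← hsum, B.sum_repr']
  have hdi0 : ⟪B i0, ones⟫ ≠ 0 := by
    intro h
    have h0 : ones = 0 := by rw [hones_eq, h, zero_smul]
    have h1 : (1 : ℝ) = 0 := congrArg (fun z : EuclideanSpace ℝ (Fin m) => z ⟨0, hm⟩) h0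
    norm_num at h1
  have hinner_ones : ⟪ones, u⟫ = 0 := by
    rw [PiLp.inner_apply]
    simpa [ones, RCLike.inner_apply] using hu
  have hci0 : ⟪B i0, u⟫ = 0 := by
    have h1 : ⟪ones, u⟫ = ⟪B i0, ones⟫ * ⟪B i0, u⟫ := by
      conv_lhs => rw [hones_eq]
      rw [real_inner_smul_left]
    rw [hinner_ones] at h1
    rcases mul_eq_zero.mp h1.symm with h | h
    · exact absurd h hdi0
    · exact h
  have hPu : ∑ i, u i ^ 2 = ∑ k, ⟪B k, u⟫ ^ 2 := by
    have h2 := B.sum_inner_mul_inner u u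
    have h1 : (⟪u, u⟫ : ℝ) = ∑ i, u i ^ 2 := by
      rw [PiLp.inner_apply]; simp [RCLike.inner_apply, sq]
    rw [← h2] at h1
    rw [← h1]
    refine Finset.sum_congr rfl fun k _ => ?_
    have e : (⟪u, B k⟫ : ℝ) = ⟪B k, u⟫ := real_inner_comm (B k) u
    rw [e]; ring
  set d : EuclideanSpace ℝ (Fin m) := u - mv W u with hdd
  have h3 : ∀ k, (⟪B k, d⟫ : ℝ) = (1 - lam k) * ⟪B k, u⟫ := by
    intro k
    rw [hdd, inner_sub_right, hWv k u]; ring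
  have hPw : ∑ i, (u i - mv W u i) ^ 2 = ∑ k, ((1 - lam k) * ⟪B k, u⟫) ^ 2 := by
    have h1 : (⟪d, d⟫ : ℝ) = ∑ i, (u i - mv W u i) ^ 2 := by
      rw [PiLp.inner_apply]
      simp [RCLike.inner_apply, sq, hdd, PiLp.sub_apply]
    have h2 := B.sum_inner_mul_inner d d
    rw [← h2] at h1
    rw [← h1]
    refine Finset.sum_congr rfl fun k _ => ?_
    have e : (⟪d, B k⟫ : ℝ) = ⟪B k, d⟫ := real_inner_comm (B k) d
    rw [e, h3 k]; ring
  rw [hPu, hPw, Finset.mul_sum]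
  refine Finset.sum_le_sum fun k _ => ?_
  by_cases hk : k = i0
  · subst hk; rw [hci0]; simp
  · have hlk : lam k ≤ lam2 := by
      rcases hub k with h | h
      · exact absurd (huniq k h) hk
      · exact h
    rw [mul_pow]
    exact mul_le_mul_of_nonneg_right
      (pow_le_pow_left₀ (by linarith) (by linarith) 2) (sq_nonneg _)

/-- Lemma 1: with `W` symmetric, doubly stochastic, positive definite,
`1` a simple eigenvalue and `λ₂ ∈ (0,1)` the second-largest eigenvalue, if `x̂*` is a
local minimizer of `Q_α` (so in particular `∇Q_α(x̂*) = 0`), then for each `i`,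
`‖x̂*ᵢ − x̄*‖ ≤ α ‖∇F(x̂*)‖ / (1 − λ₂)` where `x̄* = (1/m) Σⱼ x̂*ⱼ`. -/
theorem stmt7 {m n : ℕ} (hm : 0 < m)
    (f : Fin m → EuclideanSpace ℝ (Fin n) → ℝ)
    (hf : ∀ i, ContDiff ℝ 1 (f i))
    (W : Matrix (Fin m) (Fin m) ℝ) (hW : W.IsHermitian)
    (hds : IsDoublyStochastic W) (hpd : W.PosDef)
    (hsimple : ∃! i, hW.eigenvalues i = 1)
    (lam2 : ℝ) (hlam2_pos : 0 < lam2) (hlam2_lt : lam2 < 1)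
    (hub : ∀ i, hW.eigenvalues i = 1 ∨ hW.eigenvalues i ≤ lam2)
    (hmem : ∃ i, hW.eigenvalues i ≠ 1 ∧ hW.eigenvalues i = lam2)
    (α : ℝ) (hα : 0 < α)
    (xstar : BigSpace m n) (hmin : IsLocalMin (Qaux f W α) xstar) :
    ∀ i : Fin m,
      ‖comp xstar i - (m : ℝ)⁻¹ • ∑ j, comp xstar j‖ ≤
        α * ‖gradient (stackF f) xstar‖ / (1 - lam2) := by
  intro i
  set w : BigSpace m n := xstar - Wact W xstar with hw
  have hgrad := grad_eq f hf W hW α hα xstar hmin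
  have hnw : α * ‖gradient (stackF f) xstar‖ = ‖w‖ := by
    rw [hgrad, ← hw, norm_smul]
    simp only [Real.norm_eq_abs, abs_neg, abs_inv, abs_of_pos hα]
    field_simp
  -- the average and the deviation vector
  set xbar : EuclideanSpace ℝ (Fin n) := (m : ℝ)⁻¹ • ∑ j, comp xstar j with hxbar
  set s : BigSpace m n := WithLp.toLp 2 (fun p : Fin m × Fin n => xbar p.2) with hs
  set v : BigSpace m n := xstar - s with hv
  have hm' : (m : ℝ) ≠ 0 := Nat.cast_ne_zero.mpr hm.ne'
  have hvapp : ∀ p : Fin m × Fin n, v p = xstar p - xbar p.2 := by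
    intro p; rw [hv, PiLp.sub_apply]
  have hxbarj : ∀ j, xbar j = (m : ℝ)⁻¹ * ∑ k, xstar (k, j) := by
    intro j
    rw [hxbar, PiLp.smul_apply, smul_eq_mul]
    congr 1
    have hps := map_sum (EuclideanSpace.proj j (𝕜 := ℝ) : EuclideanSpace ℝ (Fin n) →L[ℝ] ℝ)
      (fun k : Fin m => comp xstar k) Finset.univ
    exact hps
  -- each column of v sums to zero
  have hvcol : ∀ j, ∑ k, v (k, j) = 0 := by
    intro j
    have h1 : ∑ k : Fin m, v (k, j) = ∑ k : Fin m, (xstar (k, j) - xbar j) :=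
      Finset.sum_congr rfl fun k _ => hvapp (k, j)
    rw [h1, Finset.sum_sub_distrib, Finset.sum_const, Finset.card_univ, Fintype.card_fin,
      hxbarj j, nsmul_eq_mul]
    field_simp
    ring
  -- w equals v - Ŵ v
  have hWs : Wact W s = s := by
    ext p
    show ∑ k, W p.1 k * s (k, p.2) = s p
    have : ∀ k : Fin m, s (k, p.2) = xbar p.2 := fun k => rfl
    simp only [this]
    rw [← Finset.sum_mul, hds.2.1 p.1, one_mul]
  have hWv_sub : Wact W v = Wact W xstar - Wact W s := by
    have := (WactCLM W).map_sub xstar s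
    exact this
  have hwv : v - Wact W v = w := by
    rw [hv, hWv_sub, hWs, hw]
    abel
  -- square norms as sums
  have hnormsq : ∀ z : BigSpace m n, ‖z‖ ^ 2 = ∑ p, z p ^ 2 := by
    intro z
    rw [EuclideanSpace.norm_eq, Real.sq_sqrt (Finset.sum_nonneg fun p _ => sq_nonneg _)]
    exact Finset.sum_congr rfl fun p _ => by rw [Real.norm_eq_abs, sq_abs]
  -- the key spectral estimate, summed over columns
  have hkey : (1 - lam2) ^ 2 * ‖v‖ ^ 2 ≤ ‖w‖ ^ 2 := by
    rw [hnormsq v, hnormsq w]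
    have hv2 : ∑ p, v p ^ 2 = ∑ j, ∑ k, v (k, j) ^ 2 := by
      rw [Fintype.sum_prod_type]; exact Finset.sum_comm
    have hw2 : ∑ p, w p ^ 2 = ∑ j, ∑ k, w (k, j) ^ 2 := by
      rw [Fintype.sum_prod_type]; exact Finset.sum_comm
    rw [hv2, hw2, Finset.mul_sum]
    refine Finset.sum_le_sum fun j _ => ?_
    set u : EuclideanSpace ℝ (Fin m) := WithLp.toLp 2 (fun k => v (k, j)) with hu
    have hcol : ∑ k, u k = 0 := hvcol j
    have hmvu : ∀ k, mv W u k = Wact W v (k, j) := fun k => rfl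
    have hwkj : ∀ k, w (k, j) = u k - mv W u k := by
      intro k
      rw [hmvu k]
      have := congrArg (fun z : BigSpace m n => z (k, j)) hwv
      rw [← this, PiLp.sub_apply]
    calc (1 - lam2) ^ 2 * ∑ k, v (k, j) ^ 2
        = (1 - lam2) ^ 2 * ∑ k, u k ^ 2 := rfl
      _ ≤ ∑ k, (u k - mv W u k) ^ 2 :=
          spectral_key hm W hW hds.2.1 hsimple lam2 hlam2_lt hub u hcol
      _ = ∑ k, w (k, j) ^ 2 := Finset.sum_congr rfl fun k _ => by rw [hwkj k]
  -- the block estimate: one block is dominated by the full norm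
  have hnormsq2 : ∀ z : EuclideanSpace ℝ (Fin n), ‖z‖ ^ 2 = ∑ j, z j ^ 2 := by
    intro z
    rw [EuclideanSpace.norm_eq, Real.sq_sqrt (Finset.sum_nonneg fun p _ => sq_nonneg _)]
    exact Finset.sum_congr rfl fun p _ => by rw [Real.norm_eq_abs, sq_abs]
  have hblock : ‖comp xstar i - xbar‖ ^ 2 ≤ ‖v‖ ^ 2 := by
    have h1 : ‖comp xstar i - xbar‖ ^ 2 = ∑ j, v (i, j) ^ 2 := by
      rw [hnormsq2]
      refine Finset.sum_congr rfl fun j _ => ?_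
      have h2 : (comp xstar i - xbar) j = v (i, j) := by
        rw [PiLp.sub_apply, hvapp (i, j)]; rfl
      rw [h2]
    rw [h1, hnormsq v, Fintype.sum_prod_type]
    exact Finset.single_le_sum (f := fun k => ∑ j, v (k, j) ^ 2)
      (fun k _ => Finset.sum_nonneg fun j _ => sq_nonneg _) (Finset.mem_univ i)
  -- conclude
  have hG : 0 ≤ α * ‖gradient (stackF f) xstar‖ :=
    mul_nonneg hα.le (norm_nonneg _)
  have h2 : ((1 - lam2) * ‖comp xstar i - xbar‖) ^ 2 ≤
      (α * ‖gradient (stackF f) xstar‖) ^ 2 := by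
    rw [mul_pow]
    calc (1 - lam2) ^ 2 * ‖comp xstar i - xbar‖ ^ 2
        ≤ (1 - lam2) ^ 2 * ‖v‖ ^ 2 := mul_le_mul_of_nonneg_left hblock (sq_nonneg _)
      _ ≤ ‖w‖ ^ 2 := hkey
      _ = (α * ‖gradient (stackF f) xstar‖) ^ 2 := by rw [hnw]
  have h3 : (1 - lam2) * ‖comp xstar i - xbar‖ ≤ α * ‖gradient (stackF f) xstar‖ := by
    have h4 := Real.sqrt_le_sqrt h2
    rwa [Real.sqrt_sq (mul_nonneg (by linarith) (norm_nonneg _)),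
      Real.sqrt_sq hG] at h4
  rw [le_div_iff₀ (by linarith : (0:ℝ) < 1 - lam2)]
  linarith [h3]
end
end

section
/- (Lemma 4) Let f : ℝⁿ → ℝ be twice continuously differentiable and satisfy the strict-saddle property: at every point x with ∇f(x) = 0, either λ_min(∇²f(x)) > 0 or λ_min(∇²f(x)) < 0. Let X_f* = {x : ∇f(x) = 0 and ∇²f(x) is positive definite}. Fix constants c₁, c₂ > 0 and for α > 0 let X_f^α = {x : ‖∇f(x)‖ ≤ α c₁ and λ_min(∇²f(x)) ≥ −α c₂}. Then for every compact set X ⊂ ℝⁿ and every d > 0, there exists ᾱ > 0 such that for all α ∈ (0, ᾱ] and all x ∈ X_f^α ∩ X, dist(x, X_f*) ≤ d. -/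
open scoped BigOperators RealInnerProductSpace
open Matrix MeasureTheory

noncomputable section

/-- Lemma 4: let `f` be `C²` with the strict-saddle property (at every
critical point, `λ_min(∇²f) > 0` or `λ_min(∇²f) < 0`, stated via the Hessian quadratic
form). Let `X_f* = {x : ∇f(x) = 0, ∇²f(x) ≻ 0}` and, for fixed `c₁, c₂ > 0`,
`X_f^α = {x : ‖∇f(x)‖ ≤ α c₁, λ_min(∇²f(x)) ≥ −α c₂}`. Then for every compact `X` and
every `d > 0` there is `ᾱ > 0` with: for all `α ∈ (0, ᾱ]` and all `x ∈ X_f^α ∩ X`,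
`dist(x, X_f*) ≤ d`. -/
theorem stmt10 {n : ℕ}
    (f : EuclideanSpace ℝ (Fin n) → ℝ) (hf : ContDiff ℝ 2 f)
    (hsaddle : ∀ x, gradient f x = 0 →
      (∀ v ≠ 0, 0 < hessQF f x v) ∨ (∃ v, hessQF f x v < 0))
    (c₁ c₂ : ℝ) (hc₁ : 0 < c₁) (hc₂ : 0 < c₂)
    (X : Set (EuclideanSpace ℝ (Fin n))) (hX : IsCompact X)
    (d : ℝ) (hd : 0 < d) :
    ∃ αbar > 0, ∀ α, 0 < α → α ≤ αbar → ∀ x ∈ X,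
      ‖gradient f x‖ ≤ α * c₁ →
      (∀ v, -(α * c₂) * ‖v‖ ^ 2 ≤ hessQF f x v) →
      Metric.infDist x {y | gradient f y = 0 ∧ ∀ v ≠ 0, 0 < hessQF f y v} ≤ d := by
  classical
  set S := {y : EuclideanSpace ℝ (Fin n) | gradient f y = 0 ∧ ∀ v ≠ 0, 0 < hessQF f y v} with hS
  by_contra hcon
  push_neg at hcon
  have key : ∀ k : ℕ, ∃ x ∈ X, ‖gradient f x‖ ≤ (1 / ((k : ℝ) + 1)) * c₁ ∧
      (∀ v, -((1 / ((k : ℝ) + 1)) * c₂) * ‖v‖ ^ 2 ≤ hessQF f x v) ∧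
      d < Metric.infDist x S := by
    intro k
    have hk : (0 : ℝ) < 1 / ((k : ℝ) + 1) := by positivity
    obtain ⟨α, hα0, hαle, x, hxX, hg, hh, hdist⟩ := hcon (1 / ((k : ℝ) + 1)) hk
    refine ⟨x, hxX, hg.trans (by nlinarith), fun v => le_trans ?_ (hh v), hdist⟩
    have h4 : α * c₂ * ‖v‖ ^ 2 ≤ 1 / ((k : ℝ) + 1) * c₂ * ‖v‖ ^ 2 :=
      mul_le_mul_of_nonneg_right (mul_le_mul_of_nonneg_right hαle hc₂.le) (sq_nonneg _)
    linarith
  choose xseq hxX hgrad hhess hdist using key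
  obtain ⟨x₀, hx₀X, φ, hφ, hconv⟩ := hX.tendsto_subseq hxX
  have hφk : ∀ k : ℕ, (1 : ℝ) / ((φ k : ℝ) + 1) ≤ 1 / ((k : ℝ) + 1) := by
    intro k
    apply one_div_le_one_div_of_le (by positivity)
    have h := (Nat.cast_le (α := ℝ)).2 (hφ.le_apply : k ≤ φ k)
    linarith
  have htend0 : Filter.Tendsto (fun k : ℕ => 1 / ((k : ℝ) + 1)) Filter.atTop (nhds 0) :=
    tendsto_one_div_add_atTop_nhds_zero_nat
  -- continuity of the gradient
  have hgradcont : Continuous (fun x => gradient f x) := by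
    have h1 : Continuous (fderiv ℝ f) := hf.continuous_fderiv (by norm_num)
    exact (InnerProductSpace.toDual ℝ _).symm.continuous.comp h1
  -- continuity of the Hessian quadratic form
  have hesscont : ∀ v, Continuous (fun x => hessQF f x v) := by
    intro v
    have h1 : Continuous (iteratedFDeriv ℝ 2 f) := hf.continuous_iteratedFDeriv le_rfl
    exact (continuous_eval_const ![v, v]).comp h1
  -- gradient vanishes at the limit
  have hg0 : gradient f x₀ = 0 := by
    have h1 : Filter.Tendsto (fun k => ‖gradient f (xseq (φ k))‖) Filter.atTop
        (nhds ‖gradient f x₀‖) := ((hgradcont.tendsto x₀).comp hconv).norm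
    have h2 : Filter.Tendsto (fun k => ‖gradient f (xseq (φ k))‖) Filter.atTop (nhds 0) := by
      apply squeeze_zero (fun k => norm_nonneg _) (g := fun k : ℕ => (1 / ((k : ℝ) + 1)) * c₁)
      · intro k
        refine (hgrad (φ k)).trans ?_
        exact mul_le_mul_of_nonneg_right (hφk k) hc₁.le
      · simpa using htend0.mul_const c₁
    have := tendsto_nhds_unique h1 h2
    simpa [norm_eq_zero] using this
  -- Hessian is positive semidefinite at the limit
  have hh0 : ∀ v, 0 ≤ hessQF f x₀ v := by
    intro v
    have h1 : Filter.Tendsto (fun k => hessQF f (xseq (φ k)) v) Filter.atTop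
        (nhds (hessQF f x₀ v)) := (((hesscont v).tendsto x₀).comp hconv)
    have h2 : Filter.Tendsto (fun k : ℕ => -((1 / ((k : ℝ) + 1)) * c₂) * ‖v‖ ^ 2)
        Filter.atTop (nhds 0) := by
      have := ((htend0.mul_const c₂).neg).mul_const (‖v‖ ^ 2)
      simpa using this
    refine le_of_tendsto_of_tendsto' h2 h1 ?_
    intro k
    refine le_trans ?_ (hhess (φ k) v)
    have h3 : (1 : ℝ) / ((φ k : ℝ) + 1) * c₂ ≤ 1 / ((k : ℝ) + 1) * c₂ :=
      mul_le_mul_of_nonneg_right (hφk k) hc₂.le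
    nlinarith [sq_nonneg ‖v‖]
  rcases hsaddle x₀ hg0 with hpos | ⟨v, hv⟩
  · have hx₀S : x₀ ∈ S := ⟨hg0, hpos⟩
    have h1 : Filter.Tendsto (fun k => Metric.infDist (xseq (φ k)) S) Filter.atTop
        (nhds (Metric.infDist x₀ S)) := ((Metric.continuous_infDist_pt S).tendsto x₀).comp hconv
    have hge : d ≤ Metric.infDist x₀ S :=
      ge_of_tendsto h1 (Filter.Eventually.of_forall fun k => (hdist (φ k)).le)
    rw [Metric.infDist_zero_of_mem hx₀S] at hge
    linarith
  · linarith [hh0 v]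
end
end
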